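/- Let a₁, …, a_k be finitely many pairwise distinct points of ℂ² all of whose second coordinates are nonzero. Then there exists γ ∈ ℂ such that the points Φ_γ(a₁), …, Φ_γ(a_k), where Φ_γ(z₁, z₂) = (z₁ e^{γ z₁ z₂}, z₂ e^{−γ z₁ z₂}), have pairwise distinct second coordinates. In fact, the set of γ ∈ ℂ for which this fails is countable. -/

import Mathlib

open Complex

lemma exp_fiber_countable (d w : ℂ) (hd : d ≠ 0) :
    Set.Countable {γ : ℂ | Complex.exp (γ * d) = w} := by
  by_cases h : ∃ γ₀ : ℂ, Complex.exp (γ₀ * d) = w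
  · obtain ⟨γ₀, hγ₀⟩ := h
    have hw : w ≠ 0 := hγ₀ ▸ Complex.exp_ne_zero _
    apply Set.Countable.mono ?_
      (Set.countable_range (fun n : ℤ => γ₀ + n * (2 * Real.pi * I) / d))
    intro γ hγ
    simp only [Set.mem_setOf_eq] at hγ
    have h1 : Complex.exp ((γ - γ₀) * d) = 1 := by
      rw [sub_mul, Complex.exp_sub, hγ, hγ₀, div_self hw]
    obtain ⟨n, hn⟩ := Complex.exp_eq_one_iff.mp h1
    refine ⟨n, ?_⟩
    field_simp
    linear_combination -hn
  · convert Set.countable_empty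
    rw [Set.eq_empty_iff_forall_notMem]
    exact fun γ hγ => h ⟨γ, hγ⟩

theorem stmt2 (k : ℕ) (a : Fin k → ℂ × ℂ) (ha : Function.Injective a)
    (h2 : ∀ j, (a j).2 ≠ 0) :
    Set.Countable {γ : ℂ | ¬ Function.Injective
        (fun j : Fin k => (a j).2 * Complex.exp (-(γ * (a j).1 * (a j).2)))} ∧
      ∃ γ : ℂ, Function.Injective
        (fun j : Fin k => (a j).2 * Complex.exp (-(γ * (a j).1 * (a j).2))) := by
  set f : ℂ → Fin k → ℂ :=
    fun γ j => (a j).2 * Complex.exp (-(γ * (a j).1 * (a j).2)) with hf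
  have key : ∀ i j : Fin k, i ≠ j →
      Set.Countable {γ : ℂ | f γ i = f γ j} := by
    intro i j hij
    set c : Fin k → ℂ := fun j => (a j).1 * (a j).2 with hc
    by_cases hd : c i - c j = 0
    · have hcij : c i = c j := sub_eq_zero.mp hd
      convert Set.countable_empty
      rw [Set.eq_empty_iff_forall_notMem]
      intro γ hγ
      simp only [Set.mem_setOf_eq, hf] at hγ
      have harg : -(γ * (a i).1 * (a i).2) = -(γ * (a j).1 * (a j).2) := by
        have : γ * c i = γ * c j := by rw [hcij]
        simp only [hc] at this
        linear_combination -this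
      rw [harg] at hγ
      have hb : (a i).2 = (a j).2 :=
        mul_right_cancel₀ (Complex.exp_ne_zero _) hγ
      have h1 : (a i).1 = (a j).1 := by
        have : (a i).1 * (a i).2 = (a j).1 * (a j).2 := hcij
        rw [hb] at this
        exact mul_right_cancel₀ (h2 j) this
      exact hij (ha (Prod.ext h1 hb))
    · apply Set.Countable.mono ?_ (exp_fiber_countable (c i - c j) ((a i).2 / (a j).2) hd)
      intro γ hγ
      simp only [Set.mem_setOf_eq, hf] at hγ ⊢
      have hne : Complex.exp (-(γ * (a j).1 * (a j).2)) ≠ 0 := Complex.exp_ne_zero _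
      rw [mul_sub, Complex.exp_sub]
      rw [div_eq_div_iff (Complex.exp_ne_zero _) (h2 j)]
      have hi : Complex.exp (γ * c i) * Complex.exp (-(γ * (a i).1 * (a i).2)) = 1 := by
        rw [← Complex.exp_add, show γ * c i + -(γ * (a i).1 * (a i).2) = 0 from by
          simp only [hc]; ring, Complex.exp_zero]
      have hj : Complex.exp (γ * c j) * Complex.exp (-(γ * (a j).1 * (a j).2)) = 1 := by
        rw [← Complex.exp_add, show γ * c j + -(γ * (a j).1 * (a j).2) = 0 from by
          simp only [hc]; ring, Complex.exp_zero]
      linear_combination -((Complex.exp (γ * c i) * Complex.exp (γ * c j)) * hγ)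
        + ((a i).2 * Complex.exp (γ * c j)) * hi
        - ((a j).2 * Complex.exp (γ * c i)) * hj
  have hcount : Set.Countable {γ : ℂ | ¬ Function.Injective (f γ)} := by
    have hsub : {γ : ℂ | ¬ Function.Injective (f γ)} ⊆
        ⋃ p ∈ {p : Fin k × Fin k | p.1 ≠ p.2}, {γ : ℂ | f γ p.1 = f γ p.2} := by
      intro γ hγ
      simp only [Set.mem_setOf_eq, Function.Injective, not_forall] at hγ
      obtain ⟨i, j, hij, hne⟩ := hγ
      exact Set.mem_biUnion (show (i, j) ∈ {p : Fin k × Fin k | p.1 ≠ p.2} from hne) hij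
    exact Set.Countable.mono hsub
      (Set.Countable.biUnion (Set.to_countable _) (fun p hp => key p.1 p.2 hp))
  refine ⟨hcount, ?_⟩
  by_contra hcon
  push_neg at hcon
  have : {γ : ℂ | ¬ Function.Injective (f γ)} = Set.univ := by
    ext γ; simp [hcon γ]; exact hcon γ
  rw [this] at hcount
  exact Cardinal.not_countable_real
    (by simpa using hcount.preimage Complex.ofReal_injective)
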